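/- ∑_{n≥0} (-1)^n/(2n+1)^2 = ∑_{j≥0} (1/2^{j+1}) · ( ∏_{i=1}^{j} (2i)/(2i+1) ) · ( 1 + ∑_{k=1}^{j} 1/(2k+1) ), where both series converge and the empty product and empty sum (j = 0) equal 1 and 0 respectively. -/

import Mathlib

open Finset

lemma genS (j : ℕ) : ∀ (a : ℝ), 0 < a →
    ∑ k ∈ range (j+1), (-1:ℝ)^k * (j.choose k) / ((k:ℝ)+a)^2
      = ((j.factorial : ℝ) / ∏ i ∈ range (j+1), (a+i)) * ∑ i ∈ range (j+1), (1:ℝ)/(a+i) := by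
  induction j with
  | zero => intro a ha; simp [div_mul_div_comm]; ring
  | succ j ih =>
    intro a ha
    have ha1 : (0:ℝ) < a + 1 := by linarith
    have haj : (0:ℝ) < a + (j+1) := by positivity
    set G : ℕ → ℝ := fun k => (-1:ℝ)^k * (j.choose k) / ((k:ℝ)+a)^2 with hG
    have split : ∑ k ∈ range (j+2), (-1:ℝ)^k * ((j+1).choose k) / ((k:ℝ)+a)^2
        = (∑ k ∈ range (j+1), (-1:ℝ)^k * (j.choose k) / ((k:ℝ)+a)^2)
          - ∑ k ∈ range (j+1), (-1:ℝ)^k * (j.choose k) / ((k:ℝ)+(a+1))^2 := by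
      rw [Finset.sum_range_succ' (fun k => (-1:ℝ)^k * ((j+1).choose k) / ((k:ℝ)+a)^2) (j+1)]
      have e1 : ∀ k ∈ range (j+1),
          (-1:ℝ)^(k+1) * (((j+1).choose (k+1) : ℕ) : ℝ) / (((k+1:ℕ):ℝ)+a)^2
          = -((-1:ℝ)^k * (j.choose k) / ((k:ℝ)+(a+1))^2) + G (k+1) := by
        intro k _
        rw [Nat.choose_succ_succ]
        push_cast [hG]
        ring
      rw [Finset.sum_congr rfl e1, Finset.sum_add_distrib]
      have e2 : (∑ k ∈ range (j+1), G (k+1)) + (-1:ℝ)^0 * (((j+1).choose 0 : ℕ) : ℝ) / (((0:ℕ):ℝ)+a)^2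
          = ∑ k ∈ range (j+1), (-1:ℝ)^k * (j.choose k) / ((k:ℝ)+a)^2 := by
        have : (∑ k ∈ range (j+1), G (k+1)) + G 0 = ∑ k ∈ range (j+2), G k :=
          (Finset.sum_range_succ' G (j+1)).symm
        rw [show ((-1:ℝ)^0 * (((j+1).choose 0 : ℕ) : ℝ) / (((0:ℕ):ℝ)+a)^2) = G 0 by simp [hG]]
        rw [this, Finset.sum_range_succ]
        simp [hG, Nat.choose_succ_self]
      rw [Finset.sum_neg_distrib]
      linarith [e2]
    rw [split, ih a ha, ih (a+1) ha1]
    have hPa : (0:ℝ) < ∏ i ∈ range (j+1), (a+i) := by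
      apply Finset.prod_pos; intro i _; positivity
    set Pa := ∏ i ∈ range (j+1), (a+(i:ℝ)) with hPadef
    have hPa1 : ∏ i ∈ range (j+1), ((a+1)+(i:ℝ)) = Pa * (a+(j+1)) / a := by
      have h2 : ∏ i ∈ range (j+2), (a+(i:ℝ)) = (∏ i ∈ range (j+1), (a+((i+1:ℕ):ℝ))) * (a+((0:ℕ):ℝ)) :=
        Finset.prod_range_succ' (fun i => a+(i:ℝ)) (j+1)
      have h3 : ∏ i ∈ range (j+2), (a+(i:ℝ)) = Pa * (a+(j+1)) := by
        rw [Finset.prod_range_succ]; push_cast; rw [hPadef]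
      have h4 : ∏ i ∈ range (j+1), (a+((i+1:ℕ):ℝ)) = ∏ i ∈ range (j+1), ((a+1)+(i:ℝ)) := by
        apply Finset.prod_congr rfl; intro i _; push_cast; ring
      rw [h4] at h2
      field_simp
      rw [← h3, h2]
      push_cast; ring
    have hPfull : ∏ i ∈ range (j+2), (a+(i:ℝ)) = Pa * (a+(j+1)) := by
      rw [Finset.prod_range_succ]; push_cast; rw [hPadef]
    set Ha := ∑ i ∈ range (j+1), (1:ℝ)/(a+i) with hHadef
    have hHa1 : ∑ i ∈ range (j+1), (1:ℝ)/((a+1)+i) = Ha + 1/(a+(j+1)) - 1/a := by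
      have h2 : ∑ i ∈ range (j+2), (1:ℝ)/(a+i) = (∑ i ∈ range (j+1), (1:ℝ)/(a+((i+1:ℕ):ℝ))) + 1/(a+((0:ℕ):ℝ)) :=
        Finset.sum_range_succ' (fun i => (1:ℝ)/(a+i)) (j+1)
      have h3 : ∑ i ∈ range (j+2), (1:ℝ)/(a+i) = Ha + 1/(a+(j+1)) := by
        rw [Finset.sum_range_succ]; push_cast; rw [hHadef]
      have h4 : ∑ i ∈ range (j+1), (1:ℝ)/(a+((i+1:ℕ):ℝ)) = ∑ i ∈ range (j+1), (1:ℝ)/((a+1)+i) := by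
        apply Finset.sum_congr rfl; intro i _; push_cast; ring
      rw [h4] at h2; rw [h3] at h2
      simp only [Nat.cast_zero, add_zero] at h2
      linarith
    have hHfull : ∑ i ∈ range (j+2), (1:ℝ)/(a+i) = Ha + 1/(a+(j+1)) := by
      rw [Finset.sum_range_succ]; push_cast; rw [hHadef]
    rw [hPa1, hHa1, hPfull, hHfull]
    have hfac : ((j+1).factorial : ℝ) = (j+1) * (j.factorial : ℝ) := by
      push_cast [Nat.factorial_succ]; ring
    rw [hfac]
    have hane : a ≠ 0 := ne_of_gt ha
    have hajne : a + ((j:ℝ)+1) ≠ 0 := ne_of_gt haj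
    have hPane : Pa ≠ 0 := ne_of_gt hPa
    field_simp
    ring

lemma keyS (j : ℕ) : ∑ k ∈ range (j+1), (-1:ℝ)^k * (j.choose k) / (2*(k:ℝ)+1)^2
    = (∏ i ∈ Icc 1 j, (2 * i : ℝ) / (2 * i + 1)) *
        (1 + ∑ k ∈ Icc 1 j, (1 : ℝ) / (2 * k + 1)) := by
  have hg := genS j (1/2) (by norm_num)
  have hins : range (j+1) = insert 0 (Icc 1 j) := by
    ext x; simp only [mem_range, mem_insert, mem_Icc]; omega
  have h0 : (0:ℕ) ∉ Icc 1 j := by simp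
  set Q := ∏ i ∈ Icc 1 j, (2*(i:ℝ)+1) with hQdef
  have hQpos : (0:ℝ) < Q := by
    apply Finset.prod_pos; intro i _; positivity
  -- rewrite the LHS of hg
  have hL : ∑ k ∈ range (j+1), (-1:ℝ)^k * (j.choose k) / ((k:ℝ)+1/2)^2
      = 4 * ∑ k ∈ range (j+1), (-1:ℝ)^k * (j.choose k) / (2*(k:ℝ)+1)^2 := by
    rw [Finset.mul_sum]
    apply Finset.sum_congr rfl
    intro k _
    have : ((k:ℝ)+1/2)^2 = (2*(k:ℝ)+1)^2 / 4 := by ring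
    rw [this]
    have h1 : (0:ℝ) < (2*(k:ℝ)+1)^2 := by positivity
    field_simp
  have hP : ∏ i ∈ range (j+1), ((1:ℝ)/2+i) = Q / 2^(j+1) := by
    have : ∀ i ∈ range (j+1), ((1:ℝ)/2+i) = (2*(i:ℝ)+1) / 2 := by
      intro i _; ring
    rw [Finset.prod_congr rfl this, Finset.prod_div_distrib, Finset.prod_const,
      Finset.card_range, hins, Finset.prod_insert h0]
    norm_num
    exact hQdef.symm
  have hH : ∑ i ∈ range (j+1), (1:ℝ)/((1:ℝ)/2+i)
      = 2 * (1 + ∑ k ∈ Icc 1 j, (1 : ℝ) / (2 * k + 1)) := by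
    have : ∀ i ∈ range (j+1), (1:ℝ)/((1:ℝ)/2+i) = 2 * (1/(2*(i:ℝ)+1)) := by
      intro i _
      have h1 : (0:ℝ) < 2*(i:ℝ)+1 := by positivity
      field_simp; ring
    rw [Finset.sum_congr rfl this, ← Finset.mul_sum, hins, Finset.sum_insert h0]
    norm_num
  have hprod : ∏ i ∈ Icc 1 j, (2 * (i:ℝ)) / (2 * i + 1) = 2^j * (j.factorial : ℝ) / Q := by
    rw [Finset.prod_div_distrib, Finset.prod_mul_distrib, Finset.prod_const]
    have hcard : (Icc 1 j).card = j := by simp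
    have hfac : ∏ i ∈ Icc 1 j, (i:ℝ) = (j.factorial : ℝ) := by
      rw [← Nat.cast_prod]
      congr 1
      rw [← Finset.Ico_add_one_right_eq_Icc]
      exact Finset.prod_Ico_id_eq_factorial j
    rw [hcard, hfac, hQdef]
  rw [hL, hP, hH] at hg
  rw [hprod]
  have h2 : (0:ℝ) < (2:ℝ)^(j+1) := by positivity
  have hQne : Q ≠ 0 := ne_of_gt hQpos
  have : (4:ℝ) * ∑ k ∈ range (j+1), (-1:ℝ)^k * (j.choose k) / (2*(k:ℝ)+1)^2
      = (j.factorial : ℝ) * 2^(j+1) / Q * (2 * (1 + ∑ k ∈ Icc 1 j, (1 : ℝ) / (2 * k + 1))) := by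
    rw [hg]; field_simp
  set H := 1 + ∑ k ∈ Icc 1 j, (1 : ℝ) / (2 * k + 1)
  have h4 : (2:ℝ)^(j+1) = 2 * 2^j := by ring
  rw [h4] at this
  field_simp at this ⊢
  linarith

lemma hasSum_choose_div (k : ℕ) :
    HasSum (fun j : ℕ => ((j.choose k : ℕ) : ℝ) / 2 ^ (j+1)) 1 := by
  have hr : ‖(1/2 : ℝ)‖ < 1 := by rw [Real.norm_eq_abs]; rw [abs_of_nonneg] <;> norm_num
  have h := (hasSum_choose_mul_geometric_of_norm_lt_one (r := (1/2:ℝ)) k hr).mul_right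
    ((1/2:ℝ)^(k+1))
  have h3 : HasSum (fun n : ℕ => (((n+k).choose k : ℕ):ℝ) / 2^((n+k)+1)) 1 := by
    convert h using 1
    · rfl
    · funext n
      have : (1/2:ℝ)^n * (1/2:ℝ)^(k+1) = 1/2^((n+k)+1) := by
        rw [← pow_add, div_pow, one_pow, Nat.add_assoc]
      rw [mul_assoc, this, mul_one_div]
    · have hne : ((1:ℝ)-1/2)^(k+1) ≠ 0 := by norm_num
      rw [show (1:ℝ)-1/2 = 1/2 by norm_num, one_div_mul_eq_div,
        div_self (pow_ne_zero _ (by norm_num : (1/2:ℝ) ≠ 0))]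
  have h4 := (hasSum_nat_add_iff (f := fun j : ℕ => ((j.choose k : ℕ):ℝ)/2^(j+1)) k).mp h3
  have hz : ∑ i ∈ range k, ((i.choose k : ℕ):ℝ)/2^(i+1) = 0 := by
    apply Finset.sum_eq_zero
    intro i hi
    rw [Nat.choose_eq_zero_of_lt (mem_range.mp hi)]
    simp
  rwa [hz, add_zero] at h4

lemma hsumodd : Summable (fun k : ℕ => (1:ℝ)/(2*k+1)^2) := by
  have h : Summable (fun n : ℕ => (1:ℝ)/((n:ℝ)+1)^2) := by
    have h0 : Summable (fun n : ℕ => 1/(n:ℝ)^2) := Real.summable_one_div_nat_pow.mpr (by norm_num)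
    have := (summable_nat_add_iff (f := fun n : ℕ => 1/(n:ℝ)^2) 1).mpr h0
    apply this.congr
    intro n
    norm_cast
  apply Summable.of_nonneg_of_le (fun k => by positivity) (fun k => ?_) h
  apply one_div_le_one_div_of_le (by positivity)
  nlinarith [Nat.cast_nonneg (α := ℝ) k]

/-- New series for the Dirichlet beta function value `β(2)` (Catalan's constant). -/
theorem stmt_7 :
    Summable (fun n : ℕ => (-1 : ℝ) ^ n / (2 * n + 1) ^ 2) ∧
    Summable (fun j : ℕ =>
      (1 / 2 ^ (j + 1)) * (∏ i ∈ Finset.Icc 1 j, (2 * i : ℝ) / (2 * i + 1)) *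
        (1 + ∑ k ∈ Finset.Icc 1 j, (1 : ℝ) / (2 * k + 1))) ∧
    (∑' n : ℕ, (-1 : ℝ) ^ n / (2 * n + 1) ^ 2) =
      ∑' j : ℕ,
        (1 / 2 ^ (j + 1)) * (∏ i ∈ Finset.Icc 1 j, (2 * i : ℝ) / (2 * i + 1)) *
          (1 + ∑ k ∈ Finset.Icc 1 j, (1 : ℝ) / (2 * k + 1)) := by
  set T : ℕ → ℝ := fun j =>
      (1 / 2 ^ (j + 1)) * (∏ i ∈ Finset.Icc 1 j, (2 * i : ℝ) / (2 * i + 1)) *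
        (1 + ∑ k ∈ Finset.Icc 1 j, (1 : ℝ) / (2 * k + 1)) with hT
  set F : ℕ × ℕ → ℝ := fun p =>
      (1/2^(p.2+1)) * ((-1:ℝ)^p.1 * ((p.2.choose p.1 : ℕ):ℝ) / (2*p.1+1)^2) with hFdef
  have habs_eq : ∀ k j : ℕ, |F (k,j)| = (1/(2*(k:ℝ)+1)^2) * (((j.choose k : ℕ):ℝ)/2^(j+1)) := by
    intro k j
    have : F (k,j) = (-1:ℝ)^k * ((1/(2*(k:ℝ)+1)^2) * (((j.choose k : ℕ):ℝ)/2^(j+1))) := by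
      simp only [hFdef]; ring
    rw [this, abs_mul, abs_pow, abs_neg, abs_one, one_pow, one_mul,
      abs_of_nonneg (by positivity)]
  have hfib_abs : ∀ k : ℕ, HasSum (fun j => |F (k,j)|) (1/(2*(k:ℝ)+1)^2) := by
    intro k
    have h2 := (hasSum_choose_div k).mul_left (1/(2*(k:ℝ)+1)^2)
    rw [mul_one] at h2
    have : (fun j => |F (k,j)|) = fun j => (1/(2*(k:ℝ)+1)^2) * (((j.choose k : ℕ):ℝ)/2^(j+1)) :=
      funext (habs_eq k)
    rw [this]
    exact h2
  have habs : Summable (fun p : ℕ × ℕ => |F p|) := by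
    rw [summable_prod_of_nonneg (fun p => abs_nonneg _)]
    refine ⟨fun k => (hfib_abs k).summable, ?_⟩
    apply hsumodd.congr
    intro k
    exact ((hfib_abs k).tsum_eq).symm
  have hF : Summable F := habs.of_abs
  have hinner : ∀ k : ℕ, HasSum (fun j => F (k,j)) ((-1:ℝ)^k/(2*(k:ℝ)+1)^2) := by
    intro k
    have h2 := (hasSum_choose_div k).mul_left ((-1:ℝ)^k/(2*(k:ℝ)+1)^2)
    rw [mul_one] at h2
    have : (fun j => F (k,j)) = fun j => ((-1:ℝ)^k/(2*(k:ℝ)+1)^2) * (((j.choose k : ℕ):ℝ)/2^(j+1)) := by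
      funext j; simp only [hFdef]; ring
    rw [this]
    exact h2
  have hfib : ∀ j : ℕ, HasSum (fun k => F (k,j)) (T j) := by
    intro j
    have hz : ∀ k ∉ range (j+1), F (k,j) = 0 := by
      intro k hk
      have : j < k := by simp only [mem_range] at hk; omega
      simp only [hFdef]
      rw [Nat.choose_eq_zero_of_lt this, Nat.cast_zero]
      ring
    have h1 : HasSum (fun k => F (k,j)) (∑ k ∈ range (j+1), F (k,j)) := hasSum_sum_of_ne_finset_zero hz
    have h2 : ∑ k ∈ range (j+1), F (k,j) = T j := by
      have : ∑ k ∈ range (j+1), F (k,j)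
          = (1/2^(j+1)) * ∑ k ∈ range (j+1), (-1:ℝ)^k * (j.choose k) / (2*(k:ℝ)+1)^2 := by
        rw [Finset.mul_sum]
      rw [this, keyS j, hT]
      ring
    rwa [h2] at h1
  have hG : HasSum T (∑' p : ℕ × ℕ, F p.swap) :=
    HasSum.prod_fiberwise (hF.prod_symm.hasSum) hfib
  have hswap_eq : (∑' p : ℕ × ℕ, F p.swap) = ∑' p : ℕ × ℕ, F p := by
    exact (Equiv.prodComm ℕ ℕ).tsum_eq F
  have htsum1 : (∑' p : ℕ × ℕ, F p) = ∑' k : ℕ, ((-1:ℝ)^k/(2*(k:ℝ)+1)^2) := by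
    rw [Summable.tsum_prod' hF (fun k => (hinner k).summable)]
    apply tsum_congr
    intro k
    exact (hinner k).tsum_eq
  have hfirst : Summable (fun n : ℕ => (-1 : ℝ) ^ n / (2 * n + 1) ^ 2) := by
    apply Summable.of_abs
    apply hsumodd.congr
    intro n
    rw [abs_div, abs_pow, abs_neg, abs_one, one_pow, abs_of_nonneg (by positivity)]
  refine ⟨hfirst, hG.summable, ?_⟩
  calc (∑' n : ℕ, (-1 : ℝ) ^ n / (2 * n + 1) ^ 2)
      = ∑' p : ℕ × ℕ, F p := htsum1.symm
    _ = ∑' p : ℕ × ℕ, F p.swap := hswap_eq.symm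
    _ = ∑' j : ℕ, T j := hG.tsum_eq.symm
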